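/- Let P and Q be broken combs and let (P,x) and (Q,x') be n-generated models over the same n variables based on P and Q respectively. If (P,x) and (Q,x') are 3-bisimilar, then they are fully bisimilar. -/

import Mathlib

/-! # Common framework: superintuitionistic logics, Kripke frames and models -/

/-! ## Intuitionistic propositional formulas -/

inductive Form : Type
  | var : ℕ → Form
  | bot : Form
  | top : Form
  | and : Form → Form → Form
  | or  : Form → Form → Form
  | imp : Form → Form → Form
deriving DecidableEq

namespace Form

/-- Implication depth of a formula. -/
def depth : Form → ℕ
  | var _ => 0
  | bot => 0
  | top => 0
  | and φ ψ => max φ.depth ψ.depth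
  | or φ ψ => max φ.depth ψ.depth
  | imp φ ψ => max φ.depth ψ.depth + 1

/-- All propositional variables of the formula are among `p_0, …, p_{m-1}`. -/
def varsLt (m : ℕ) : Form → Prop
  | var p => p < m
  | bot => True
  | top => True
  | and φ ψ => φ.varsLt m ∧ ψ.varsLt m
  | or φ ψ => φ.varsLt m ∧ ψ.varsLt m
  | imp φ ψ => φ.varsLt m ∧ ψ.varsLt m

/-- Uniform substitution. -/
def subst (σ : ℕ → Form) : Form → Form
  | var p => σ p
  | bot => bot
  | top => top
  | and φ ψ => and (φ.subst σ) (ψ.subst σ)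
  | or φ ψ => or (φ.subst σ) (ψ.subst σ)
  | imp φ ψ => imp (φ.subst σ) (ψ.subst σ)

/-- Biconditional. -/
def iff (φ ψ : Form) : Form := and (imp φ ψ) (imp ψ φ)

/-- Negation. -/
def neg (φ : Form) : Form := imp φ bot

end Form

/-! ## IPC and superintuitionistic logics -/

/-- A Hilbert-style axiomatization of intuitionistic propositional logic. -/
inductive IPC : Form → Prop
  | ax1 (φ ψ : Form) : IPC (.imp φ (.imp ψ φ))
  | ax2 (φ ψ χ : Form) :
      IPC (.imp (.imp φ (.imp ψ χ)) (.imp (.imp φ ψ) (.imp φ χ)))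
  | andE1 (φ ψ : Form) : IPC (.imp (.and φ ψ) φ)
  | andE2 (φ ψ : Form) : IPC (.imp (.and φ ψ) ψ)
  | andI (φ ψ : Form) : IPC (.imp φ (.imp ψ (.and φ ψ)))
  | orI1 (φ ψ : Form) : IPC (.imp φ (.or φ ψ))
  | orI2 (φ ψ : Form) : IPC (.imp ψ (.or φ ψ))
  | orE (φ ψ χ : Form) :
      IPC (.imp (.imp φ χ) (.imp (.imp ψ χ) (.imp (.or φ ψ) χ)))
  | botE (φ : Form) : IPC (.imp .bot φ)
  | topI : IPC .top
  | mp (φ ψ : Form) : IPC (.imp φ ψ) → IPC φ → IPC ψ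

/-- The set of theorems of IPC. -/
def IPCSet : Set Form := {φ | IPC φ}

/-- A superintuitionistic logic: a set of formulas containing all theorems of
IPC, closed under modus ponens and uniform substitution. -/
def IsSILogic (L : Set Form) : Prop :=
  IPCSet ⊆ L ∧
  (∀ φ ψ : Form, Form.imp φ ψ ∈ L → φ ∈ L → ψ ∈ L) ∧
  (∀ (φ : Form) (σ : ℕ → Form), φ ∈ L → φ.subst σ ∈ L)

/-- `oplus L Γ` is the least superintuitionistic logic containing `L` and `Γ`
(written `L ⊕ Γ`). -/
def oplus (L Γ : Set Form) : Set Form :=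
  ⋂₀ {M : Set Form | IsSILogic M ∧ L ⊆ M ∧ Γ ⊆ M}

/-- A logic is `n`-uniform if every formula is provably equivalent in it to a
formula of implication depth at most `n`. -/
def Uniform (L : Set Form) (n : ℕ) : Prop :=
  ∀ φ : Form, ∃ ψ : Form, ψ.depth ≤ n ∧ Form.iff φ ψ ∈ L

/-- A logic is locally tabular if over each finite tuple of variables there are
only finitely many formulas up to provable equivalence. -/
def LocallyTabular (L : Set Form) : Prop :=
  ∀ m : ℕ, ∃ Φ : Finset Form, ∀ φ : Form, φ.varsLt m → ∃ ψ ∈ Φ, Form.iff φ ψ ∈ L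

/-! ## Kripke frames (posets) -/

structure Frame : Type 1 where
  W : Type
  le : W → W → Prop
  refl : ∀ x, le x x
  trans : ∀ x y z, le x y → le y z → le x z
  antisymm : ∀ x y, le x y → le y x → x = y

namespace Frame

def lt (F : Frame) (a b : F.W) : Prop := F.le a b ∧ a ≠ b

/-- A valuation is persistent if it is preserved upwards. -/
def Persistent (F : Frame) (V : ℕ → F.W → Prop) : Prop :=
  ∀ p a b, F.le a b → V p a → V p b

/-- Kripke forcing. -/
def force (F : Frame) (V : ℕ → F.W → Prop) : Form → F.W → Prop
  | .var p, w => V p w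
  | .bot, _ => False
  | .top, _ => True
  | .and φ ψ, w => F.force V φ w ∧ F.force V ψ w
  | .or φ ψ, w => F.force V φ w ∨ F.force V ψ w
  | .imp φ ψ, w => ∀ v, F.le w v → F.force V φ v → F.force V ψ v

/-- `F ⊩ φ`. -/
def Valid (F : Frame) (φ : Form) : Prop :=
  ∀ V : ℕ → F.W → Prop, F.Persistent V → ∀ w : F.W, F.force V φ w

def Rooted (F : Frame) : Prop := ∃ r, ∀ w, F.le r w

/-- The subposet on a subset of the carrier. -/
def restrict (F : Frame) (s : Set F.W) : Frame where
  W := s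
  le a b := F.le a.1 b.1
  refl a := F.refl a.1
  trans a b c h1 h2 := F.trans a.1 b.1 c.1 h1 h2
  antisymm a b h1 h2 := Subtype.ext (F.antisymm a.1 b.1 h1 h2)

/-- The rooted upset `↑z`. -/
def up (F : Frame) (z : F.W) : Frame := F.restrict {w | F.le z w}

/-- There is a chain of `d` elements in `↑w` starting at `w`. -/
def hasChainUp (F : Frame) (w : F.W) (d : ℕ) : Prop :=
  ∃ f : Fin d → F.W, (∀ i : Fin d, (i : ℕ) = 0 → f i = w) ∧
    (∀ i j : Fin d, (i : ℕ) < (j : ℕ) → F.lt (f i) (f j))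

/-- The depth of `w` is `d`: the longest chain in `↑w` has exactly `d` elements. -/
def depthEq (F : Frame) (w : F.W) (d : ℕ) : Prop :=
  F.hasChainUp w d ∧ ¬ F.hasChainUp w (d + 1)

/-- The covering relation of the poset. -/
def covBy (F : Frame) (a b : F.W) : Prop :=
  F.lt a b ∧ ∀ c, F.lt a c → F.lt c b → False

end Frame

/-- A p-morphism of posets. -/
def IsPMorphism (P Q : Frame) (f : P.W → Q.W) : Prop :=
  (∀ a b, P.le a b → Q.le (f a) (f b)) ∧
  (∀ a b, Q.le (f a) b → ∃ a', P.le a a' ∧ f a' = b)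

/-- `Q` is a p-morphic image of `P`. -/
def PMorphicImage (P Q : Frame) : Prop :=
  ∃ f : P.W → Q.W, IsPMorphism P Q f ∧ Function.Surjective f

/-- Order isomorphism of posets. -/
def FrameIso (P Q : Frame) : Prop :=
  ∃ f : P.W → Q.W, Function.Bijective f ∧ ∀ a b, P.le a b ↔ Q.le (f a) (f b)

/-- The logic of a class of posets. -/
def LogK (K : Set Frame) : Set Form := {φ | ∀ F ∈ K, F.Valid φ}

/-- The logic of a single poset. -/
def FrameLog (F : Frame) : Set Form := {φ | F.Valid φ}

/-- `J` is a Yankov formula for the finite rooted poset `Q`: a finite poset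
refutes `J` exactly when `Q` is isomorphic to a rooted upset of one of its
p-morphic images. -/
def IsYankov (J : Form) (Q : Frame) : Prop :=
  ∀ P : Frame, Finite P.W →
    (¬ P.Valid J ↔ ∃ G : Frame, PMorphicImage P G ∧ ∃ z : G.W, FrameIso (G.up z) Q)

/-! ## Rooted Kripke models over `n` propositional variables -/

structure Model (n : ℕ) : Type 1 where
  W : Type
  le : W → W → Prop
  refl : ∀ x, le x x
  trans : ∀ x y z, le x y → le y z → le x z
  antisymm : ∀ x y, le x y → le y x → x = y
  root : W
  rooted : ∀ w, le root w
  col : W → Set (Fin n)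
  mono : ∀ a b, le a b → col a ⊆ col b

namespace Model

/-- The underlying poset of a model. -/
def frame {n : ℕ} (M : Model n) : Frame :=
  ⟨M.W, M.le, M.refl, M.trans, M.antisymm⟩

def force {n : ℕ} (M : Model n) : Form → M.W → Prop
  | .var p, w => ∃ h : p < n, (⟨p, h⟩ : Fin n) ∈ M.col w
  | .bot, _ => False
  | .top, _ => True
  | .and φ ψ, w => M.force φ w ∧ M.force ψ w
  | .or φ ψ, w => M.force φ w ∨ M.force ψ w
  | .imp φ ψ, w => ∀ v, M.le w v → M.force φ v → M.force ψ v

/-- Satisfaction at the root of the model. -/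
def Sat {n : ℕ} (M : Model n) (φ : Form) : Prop := M.force φ M.root

/-- (Full) bisimilarity of two rooted models. -/
def Bisim {n : ℕ} (M N : Model n) : Prop :=
  ∃ S : M.W → N.W → Prop,
    S M.root N.root ∧
    (∀ a b, S a b → M.col a = N.col b) ∧
    (∀ a b a', S a b → M.le a a' → ∃ b', N.le b b' ∧ S a' b') ∧
    (∀ a b b', S a b → N.le b b' → ∃ a', M.le a a' ∧ S a' b')

/-- `k`-bisimilarity of the points `x, y`, via a decreasing chain
`S k ⊆ ⋯ ⊆ S 0` of relations. -/
def NBisimAt {n : ℕ} (M N : Model n) (k : ℕ) (x : M.W) (y : N.W) : Prop :=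
  ∃ S : ℕ → M.W → N.W → Prop,
    (∀ j a b, S (j + 1) a b → S j a b) ∧
    S k x y ∧
    (∀ a b, S 0 a b → M.col a = N.col b) ∧
    (∀ j a b a', j < k → S (j + 1) a b → M.le a a' →
        ∃ b', N.le b b' ∧ S j a' b') ∧
    (∀ j a b b', j < k → S (j + 1) a b → N.le b b' →
        ∃ a', M.le a a' ∧ S j a' b')

/-- `k`-bisimilarity of two rooted models. -/
def NBisim {n : ℕ} (M N : Model n) (k : ℕ) : Prop :=
  NBisimAt M N k M.root N.root

/-- The submodel on the rooted upset `↑z`. -/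
def up {n : ℕ} (M : Model n) (z : M.W) : Model n where
  W := {w : M.W // M.le z w}
  le a b := M.le a.1 b.1
  refl a := M.refl a.1
  trans a b c h1 h2 := M.trans a.1 b.1 c.1 h1 h2
  antisymm a b h1 h2 := Subtype.ext (M.antisymm a.1 b.1 h1 h2)
  root := ⟨z, M.refl z⟩
  rooted w := w.2
  col a := M.col a.1
  mono a b h := M.mono a.1 b.1 h

/-- `(M, x) ≤ₖ (N, y)`: there is `z ≥ x` such that `(↑z, z)` is `k`-bisimilar
with `(N, y)`. -/
def LeBisim {n : ℕ} (M N : Model n) (k : ℕ) : Prop :=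
  ∃ z : M.W, M.le M.root z ∧ NBisim (M.up z) N k

/-- Two points of a model are bisimilar. -/
def PointsBisim {n : ℕ} (M : Model n) (a b : M.W) : Prop :=
  ∃ S : M.W → M.W → Prop,
    S a b ∧
    (∀ x y, S x y → M.col x = M.col y) ∧
    (∀ x y x', S x y → M.le x x' → ∃ y', M.le y y' ∧ S x' y') ∧
    (∀ x y y', S x y → M.le y y' → ∃ x', M.le x x' ∧ S x' y')

/-- A model over `n` variables is (`n`-)generated if it contains no two
distinct bisimilar points. -/
def Generated {n : ℕ} (M : Model n) : Prop :=
  ∀ a b : M.W, M.PointsBisim a b → a = b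

/-- Isomorphism of models: a root-preserving, color-preserving order
isomorphism. -/
def Iso {n : ℕ} (M N : Model n) : Prop :=
  ∃ f : M.W → N.W, Function.Bijective f ∧ f M.root = N.root ∧
    (∀ a b, M.le a b ↔ N.le (f a) (f b)) ∧ (∀ a, N.col (f a) = M.col a)

/-- `M` is a model over the class of posets `K`: its underlying poset is a
p-morphic image of a rooted upset of a member of `K`. -/
def InClass {n : ℕ} (K : Set Frame) (M : Model n) : Prop :=
  ∃ F ∈ K, ∃ z : F.W, PMorphicImage (F.up z) M.frame

/-- The model on the rooted upset `↑z` of a frame `F`, with coloring `c`. -/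
def ofFrame (F : Frame) (z : F.W) (n : ℕ) (c : (F.up z).W → Set (Fin n))
    (hc : ∀ a b : (F.up z).W, (F.up z).le a b → c a ⊆ c b) : Model n where
  W := (F.up z).W
  le := (F.up z).le
  refl := (F.up z).refl
  trans := (F.up z).trans
  antisymm := (F.up z).antisymm
  root := ⟨z, F.refl z⟩
  rooted w := w.2
  col := c
  mono := hc

end Model

/-! ## Boolean sums and stacks -/

/-- A (finite rooted) poset is a Boolean sum: it is rooted, covers decrease the
depth by exactly one, and every point of depth `k+1` lies below every point of
depth `k`. -/
def IsBooleanSum (F : Frame) : Prop :=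
  F.Rooted ∧
  (∀ a b da db, F.covBy a b → F.depthEq a da → F.depthEq b db → da = db + 1) ∧
  (∀ a b k, F.depthEq a (k + 1) → F.depthEq b k → F.le a b)

/-- `F` contains a `k`-stack: `k` consecutive layers (sets of points of equal
depth) each containing at least two points. -/
def HasStack (F : Frame) (k : ℕ) : Prop :=
  ∃ j : ℕ, ∀ i : ℕ, j ≤ i → i < j + k →
    ∃ a b : F.W, a ≠ b ∧ F.depthEq a i ∧ F.depthEq b i

/-! ## The posets Q₁, …, Q₈ -/

def q1le : Fin 4 → Fin 4 → Bool := fun a b =>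
  a = b || a = 0 || (a = 1 && b = 3)
def q2le : Fin 5 → Fin 5 → Bool := fun a b =>
  a = b || a = 0 || (a = 1 && (b = 3 || b = 4)) || (a = 2 && b = 4)
def q3le : Fin 5 → Fin 5 → Bool := fun a b =>
  a = b || a = 0 || (a = 1 && b = 4) || (a = 2 && (b = 3 || b = 4)) ||
    (a = 3 && b = 4)
def q4le : Fin 5 → Fin 5 → Bool := fun a b =>
  a = b || a = 0 || ((a = 1 || a = 2) && (b = 3 || b = 4))
def q5le : Fin 6 → Fin 6 → Bool := fun a b =>
  a = b || a = 0 || b = 5 || ((a = 1 || a = 2) && (b = 3 || b = 4))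
def q6le : Fin 4 → Fin 4 → Bool := fun a b =>
  a = b || a = 0 || b = 3
def q7le : Fin 5 → Fin 5 → Bool := fun a b =>
  a = b || a = 0 || (a = 1 && b = 3) || (a = 2 && b = 4)
def q8le : Fin 4 → Fin 4 → Bool := fun a b =>
  a = b || a = 0

/-- `Q₁`: root `0`; immediate successors `1`, `2`; `2` maximal; `3` the unique
(maximal) immediate successor of `1`. -/
def Q1f : Frame :=
  ⟨Fin 4, fun a b => q1le a b = true, by decide, by decide, by decide⟩
/-- `Q₂`: root `0`; immediate successors `1`, `2`; maximal points `3`, `4`;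
`1 < 3`, `1 < 4`, `2 < 4`, `2 ≮ 3`. -/
def Q2f : Frame :=
  ⟨Fin 5, fun a b => q2le a b = true, by decide, by decide, by decide⟩
/-- `Q₃`: root `0`; immediate successors `1`, `2`; `3` covers `2`; top `4`
with `1 < 4` and `3 < 4`. -/
def Q3f : Frame :=
  ⟨Fin 5, fun a b => q3le a b = true, by decide, by decide, by decide⟩
/-- `Q₄`: root `0`; `1`, `2` cover the root; maximal `3`, `4` above both `1`
and `2`. -/
def Q4f : Frame :=
  ⟨Fin 5, fun a b => q4le a b = true, by decide, by decide, by decide⟩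
/-- `Q₅`: `Q₄` with a greatest element `5` added on top. -/
def Q5f : Frame :=
  ⟨Fin 6, fun a b => q5le a b = true, by decide, by decide, by decide⟩
/-- `Q₆`: the diamond. -/
def Q6f : Frame :=
  ⟨Fin 4, fun a b => q6le a b = true, by decide, by decide, by decide⟩
/-- `Q₇`: root `0`; `1 < 3`, `2 < 4`, and no other strict relations above the
root. -/
def Q7f : Frame :=
  ⟨Fin 5, fun a b => q7le a b = true, by decide, by decide, by decide⟩
/-- `Q₈`: a root with three pairwise incomparable maximal points. -/
def Q8f : Frame :=
  ⟨Fin 4, fun a b => q8le a b = true, by decide, by decide, by decide⟩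

/-! ## Particular logics -/

/-- The one-element poset. -/
def unitFrame : Frame :=
  ⟨PUnit, fun _ _ => True, fun _ => trivial, fun _ _ _ _ _ => trivial,
    fun a b _ _ => Subsingleton.elim a b⟩

/-- The two-element chain. -/
def chain2 : Frame :=
  ⟨Bool, fun a b => a ≤ b, le_refl, fun _ _ _ => le_trans,
    fun _ _ => le_antisymm⟩

/-- Classical propositional logic: the logic of the one-element poset. -/
def CPC : Set Form := FrameLog unitFrame

/-- The logic of the two-element chain. -/
def Sme : Set Form := FrameLog chain2

/-- The weak Peirce law `(q → p) ∨ (((p → q) → p) → p)`. -/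
def wPLax : Form :=
  .or (.imp (.var 1) (.var 0))
    (.imp (.imp (.imp (.var 0) (.var 1)) (.var 0)) (.var 0))

/-- The logic `wPL = IPC ⊕ (q → p) ∨ (((p → q) → p) → p)`. -/
def wPL : Set Form := oplus IPCSet {wPLax}

/-- The bounded-width-2 axiom `⋁_{i≤2} (pᵢ → ⋁_{j≠i} pⱼ)`. -/
def bw2ax : Form :=
  .or (.imp (.var 0) (.or (.var 1) (.var 2)))
    (.or (.imp (.var 1) (.or (.var 0) (.var 2)))
      (.imp (.var 2) (.or (.var 0) (.var 1))))

/-- The axiom `¬p ∨ ¬¬p`. -/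
def kcax : Form := .or (Form.neg (.var 0)) (Form.neg (Form.neg (.var 0)))

/-- The logic `Box = wPL ⊕ bw₂ ⊕ (¬p ∨ ¬¬p)`. -/
def BoxLogic : Set Form := oplus wPL {bw2ax, kcax}

/-- The bounded-depth formulas. -/
def bd : ℕ → Form
  | 0 => .var 0
  | n + 1 => .or (.var (n + 1)) (.imp (.var (n + 1)) (bd n))

/-- The logic `BD_n = IPC ⊕ bd_n`. -/
def BD (n : ℕ) : Set Form := oplus IPCSet {bd n}

/-- A logic is of finite depth if it contains some `BD_n`. -/
def FiniteDepth (L : Set Form) : Prop := ∃ n, BD n ⊆ L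

/-! ## The Rieger–Nishimura ladder -/

/-- Points of the Rieger–Nishimura ladder: `inl k = L_k`, `inr k = R_k`. -/
abbrev RNpt : Type := ℕ ⊕ ℕ

/-- The covering relation of the Rieger–Nishimura ladder (`rnCov a b` means
`a ⋖ b`, i.e. `b` is an immediate successor of `a`). -/
inductive rnCov : RNpt → RNpt → Prop
  | ll (k : ℕ) : rnCov (.inl (k + 1)) (.inl k)
  | rr (k : ℕ) : rnCov (.inr (k + 1)) (.inr k)
  | rl (k : ℕ) : rnCov (.inr (k + 1)) (.inl k)
  | lr (k : ℕ) : rnCov (.inl (k + 2)) (.inr k)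

private def rnIdx : RNpt → ℕ
  | .inl k => 2 * k
  | .inr k => 2 * k + 1

private theorem rnCov_idx {a b : RNpt} (h : rnCov a b) : rnIdx b < rnIdx a := by
  cases h <;> simp [rnIdx] <;> omega

private theorem rnLe_idx {a b : RNpt} (h : Relation.ReflTransGen rnCov a b) :
    rnIdx b ≤ rnIdx a := by
  induction h with
  | refl => exact le_rfl
  | tail _ h₂ ih => exact le_trans (le_of_lt (rnCov_idx h₂)) ih

private theorem rnIdx_inj {a b : RNpt} (h : rnIdx a = rnIdx b) : a = b := by
  rcases a with a | a <;> rcases b with b | b <;> simp [rnIdx] at h ⊢ <;> omega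

/-- The Rieger–Nishimura ladder as a poset: the order is the reflexive
transitive closure of the covering relation. -/
def RN : Frame where
  W := RNpt
  le a b := Relation.ReflTransGen rnCov a b
  refl _ := Relation.ReflTransGen.refl
  trans _ _ _ h1 h2 := h1.trans h2
  antisymm _ _ h1 h2 := rnIdx_inj (le_antisymm (rnLe_idx h2) (rnLe_idx h1))

/-! ## Combs -/

def combLe (n : ℕ) : (Fin n ⊕ Fin n) → (Fin n ⊕ Fin n) → Prop
  | .inl i, .inl j => i ≤ j
  | .inl i, .inr j => i ≤ j
  | .inr i, .inr j => i = j
  | .inr _, .inl _ => False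

/-- The `n`-comb: base points `x_1 ≤ … ≤ x_n` (encoded `inl 0, …, inl (n-1)`)
and maximal teeth `y_1, …, y_n` (encoded `inr 0, …, inr (n-1)`), with
`x_i ≤ y_j ↔ i ≤ j` and the teeth pairwise incomparable. -/
def Comb (n : ℕ) : Frame where
  W := Fin n ⊕ Fin n
  le := combLe n
  refl := by rintro (i | i) <;> simp [combLe]
  trans := by
    rintro (i | i) (j | j) (k | k) h1 h2 <;> simp only [combLe] at * <;>
      first
        | exact le_trans h1 h2
        | exact h2 ▸ h1
  antisymm := by
    rintro (i | i) (j | j) h1 h2 <;> simp only [combLe] at * <;>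
      first
        | exact congrArg Sum.inl (le_antisymm h1 h2)
        | exact congrArg Sum.inr h1

/-- A broken `m`-comb: (isomorphic to) a subposet of the `m`-comb containing
all of the base points `x_1, …, x_m`. -/
def IsBrokenComb (F : Frame) (m : ℕ) : Prop :=
  ∃ s : Set (Comb m).W, (∀ i : Fin m, Sum.inl i ∈ s) ∧
    FrameIso F ((Comb m).restrict s)

/-- The logic of the class of all combs. -/
def LFC : Set Form := LogK {F | ∃ n, F = Comb n}

/-! ## The stacked models `M_n^k` and `N_n^k` -/

/-- Height index of a point: layer `j` (from the top) has index `j`, the root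
(`none`) has index `k+1`. -/
def stackIdx (k : ℕ) : Option (Fin (k + 1) × Bool) → ℕ
  | none => k + 1
  | some (j, _) => j

/-- Size of the color (an initial segment of the variables): the left point
(`false`) of layer `j` gets `1^{n-j}0^j`, the right point (`true`) gets
`1^{n-j-1}0^{j+1}`, and the root gets `1^r0^{n-r}`. -/
def stackColSize (n k r : ℕ) : Option (Fin (k + 1) × Bool) → ℕ
  | none => r
  | some (j, false) => n - j
  | some (j, true) => n - ((j : ℕ) + 1)

private theorem stackColSize_le (n k r : ℕ) (hr : r ≤ n - (k + 1))
    {a b : Option (Fin (k + 1) × Bool)} (h : stackIdx k b < stackIdx k a) :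
    stackColSize n k r a ≤ stackColSize n k r b := by
  rcases a with _ | ⟨j, _ | _⟩ <;> rcases b with _ | ⟨j', _ | _⟩ <;>
    simp only [stackIdx, stackColSize] at * <;> omega

/-- The common shape of `M_n^k` and `N_n^k`, with root color `1^r0^{n-r}`:
`k+1` layers of two points stacked on top of a root. -/
def stackModel (n k r : ℕ) (hr : r ≤ n - (k + 1)) : Model n where
  W := Option (Fin (k + 1) × Bool)
  le a b := a = b ∨ stackIdx k b < stackIdx k a
  refl _ := Or.inl rfl
  trans := by
    rintro a b c (rfl | h1) h2
    · exact h2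
    · rcases h2 with rfl | h2
      · exact Or.inr h1
      · exact Or.inr (h2.trans h1)
  antisymm := by
    rintro a b (rfl | h1) h2
    · rfl
    · rcases h2 with rfl | h2
      · rfl
      · omega
  root := none
  rooted := by
    rintro (_ | ⟨j, s⟩)
    · exact Or.inl rfl
    · exact Or.inr j.isLt
  col a := {i : Fin n | (i : ℕ) < stackColSize n k r a}
  mono := by
    rintro a b (rfl | h) i hi
    · exact hi
    · exact lt_of_lt_of_le hi (stackColSize_le n k r hr h)

/-- The model `M_n^k` (root color `1^{n-k-1}0^{k+1}`). -/
def Mmodel (n k : ℕ) : Model n := stackModel n k (n - (k + 1)) le_rfl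

/-- The model `N_n^k` (root color `1^{n-k-2}0^{k+2}`). -/
def Nmodel (n k : ℕ) : Model n := stackModel n k (n - (k + 2)) (by omega)

/-! ## The frames `S_n` -/

/-- Height index in `S_n`: the top point (`some none`) has index `0`, the two
points of the `j`-th middle layer have index `j+1`, and the root (`none`) has
index `n`. -/
def sIdx (n : ℕ) : Option (Option (Fin (n - 1) × Bool)) → ℕ
  | none => n
  | some none => 0
  | some (some (j, _)) => (j : ℕ) + 1

/-- The frame `S_n` (for `n ≥ 2`): the Boolean sum whose layers from top to
bottom have sizes `1, 2, …, 2, 1` (with `n - 1` layers of size `2`). -/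
def SFrame (n : ℕ) : Frame where
  W := Option (Option (Fin (n - 1) × Bool))
  le a b := a = b ∨ sIdx n b < sIdx n a
  refl _ := Or.inl rfl
  trans := by
    rintro a b c (rfl | h1) h2
    · exact h2
    · rcases h2 with rfl | h2
      · exact Or.inr h1
      · exact Or.inr (h2.trans h1)
  antisymm := by
    rintro a b (rfl | h1) h2
    · rfl
    · rcases h2 with rfl | h2
      · rfl
      · omega

section Statement11Aux

variable {n : ℕ}

/-- Colors of points above `w`. -/
def Colset (M : Model n) (w : M.W) : Set (Set (Fin n)) :=
  {c | ∃ v, M.le w v ∧ M.col v = c}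

/-- 1-types of points above `w`. -/
def Gam1 (M : Model n) (w : M.W) : Set (Set (Fin n) × Set (Set (Fin n))) :=
  {t | ∃ v, M.le w v ∧ (M.col v, Colset M v) = t}

/-- 2-types of points above `w`. -/
def Gam2 (M : Model n) (w : M.W) :
    Set (Set (Fin n) × Set (Set (Fin n) × Set (Set (Fin n)))) :=
  {t | ∃ v, M.le w v ∧ (M.col v, Gam1 M v) = t}

/-- `w` is maximal. -/
def Mx (M : Model n) (w : M.W) : Prop := ∀ v, M.le w v → v = w

lemma gam1_antitone (M : Model n) {a b : M.W} (h : M.le a b) :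
    Gam1 M b ⊆ Gam1 M a := by
  rintro t ⟨v, hv, he⟩
  exact ⟨v, M.trans _ _ _ h hv, he⟩

lemma mx_colset (M : Model n) (w : M.W) (h : Mx M w) :
    Colset M w = {M.col w} := by
  apply Set.Subset.antisymm
  · rintro c ⟨v, hv, rfl⟩
    rw [h v hv]
    exact Set.mem_singleton _
  · rintro c hc
    rw [Set.mem_singleton_iff] at hc
    exact ⟨w, M.refl w, hc.symm⟩

lemma mx_gam1 (M : Model n) (w : M.W) (h : Mx M w) :
    Gam1 M w = {(M.col w, Colset M w)} := by
  apply Set.Subset.antisymm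
  · rintro t ⟨v, hv, rfl⟩
    rw [h v hv]
    exact Set.mem_singleton _
  · rintro t ht
    rw [Set.mem_singleton_iff] at ht
    exact ⟨w, M.refl w, ht.symm⟩

lemma exists_max (M : Model n) [Finite M.W] (w : M.W) :
    ∃ q, M.le w q ∧ Mx M q := by
  letI : PartialOrder M.W :=
    { le := M.le, le_refl := M.refl, le_trans := M.trans, le_antisymm := M.antisymm }
  obtain ⟨q, hq, hmax⟩ := Set.Finite.exists_maximalFor (id : M.W → M.W)
    {z | M.le w z} (Set.toFinite _) ⟨w, M.refl w⟩
  exact ⟨q, hq, fun v hv => M.antisymm v q (hmax (M.trans _ _ _ hq hv) hv) hv⟩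

/-- In a generated finite model, a point all of whose successors share its
color is maximal. -/
lemma F1' (M : Model n) [Finite M.W] (hg : M.Generated) (w : M.W)
    (h : ∀ v, M.le w v → M.col v = M.col w) : Mx M w := by
  intro v hv
  obtain ⟨q, hq, hmq⟩ := exists_max M v
  have hwq : M.le w q := M.trans _ _ _ hv hq
  have hpb : M.PointsBisim w q := by
    refine ⟨fun x y => M.le w x ∧ y = q, ⟨M.refl w, rfl⟩, ?_, ?_, ?_⟩
    · rintro x y ⟨hx, hy⟩
      rw [h x hx, hy, h q hwq]
    · rintro x y x' ⟨hx, hy⟩ hxx'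
      exact ⟨y, M.refl y, M.trans _ _ _ hx hxx', hy⟩
    · rintro x y y' ⟨hx, hy⟩ hyy'
      have hqy' : M.le q y' := by rw [← hy]; exact hyy'
      exact ⟨x, M.refl x, hx, hmq _ hqy'⟩
  have hwqe : w = q := hg _ _ hpb
  have hvw : M.le v w := by rw [hwqe]; exact hq
  exact M.antisymm v w hvw hv

/-- In a generated broken-comb model, comparable points with equal colors and
equal `Gam1` coincide. -/
lemma inj2 (M : Model n) [Finite M.W] (hg : M.Generated)
    (hcmp : ∀ a b : M.W, ¬ Mx M a → ¬ Mx M b → M.le a b ∨ M.le b a)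
    (p p' : M.W) (hle : M.le p p') (hcol : M.col p = M.col p')
    (hG : Gam1 M p = Gam1 M p') : p = p' := by
  apply hg
  refine ⟨fun z z' => M.le p z ∧ M.le p z' ∧ M.col z = M.col z' ∧
      Gam1 M z = Gam1 M z' ∧ (M.le z z' ∨ (Mx M z ∧ Mx M z')),
    ⟨M.refl p, hle, hcol, hG, Or.inl hle⟩, ?_, ?_, ?_⟩
  · rintro x y ⟨_, _, hc, _, _⟩
    exact hc
  · -- forth
    rintro z z' w ⟨hpz, hpz', hczz, hgzz, hd⟩ hzw
    by_cases hmz : Mx M z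
    · have hwz : w = z := hmz w hzw
      subst hwz
      exact ⟨z', M.refl z', hpz, hpz', hczz, hgzz, hd⟩
    · have hzz' : M.le z z' := by
        rcases hd with h' | ⟨h', _⟩
        · exact h'
        · exact absurd h' hmz
      have hz'nm : ¬ Mx M z' := by
        intro hm
        apply hmz
        apply F1' M hg
        intro v hv
        have hmem : (M.col v, Colset M v) ∈ Gam1 M z := ⟨v, hv, rfl⟩
        rw [hgzz] at hmem
        obtain ⟨u, hu, he⟩ := hmem
        have hu' : u = z' := hm u hu
        subst hu'
        rw [Prod.mk.injEq] at he
        exact he.1.symm.trans hczz.symm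
      by_cases hc1 : M.le z' w
      · exact ⟨w, hc1, M.trans _ _ _ hpz hzw, M.trans _ _ _ hpz' hc1, rfl, rfl,
          Or.inl (M.refl w)⟩
      · by_cases hmw : Mx M w
        · have hmem : (M.col w, Colset M w) ∈ Gam1 M z := ⟨w, hzw, rfl⟩
          rw [hgzz] at hmem
          obtain ⟨w', hw', he⟩ := hmem
          rw [Prod.mk.injEq] at he
          have hcsw : Colset M w = {M.col w} := mx_colset M w hmw
          have hmw' : Mx M w' := by
            apply F1' M hg
            intro x hx
            have hmem2 : M.col x ∈ Colset M w' := ⟨x, hx, rfl⟩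
            rw [he.2, hcsw, Set.mem_singleton_iff] at hmem2
            rw [hmem2]
            exact he.1.symm
          refine ⟨w', hw', M.trans _ _ _ hpz hzw, M.trans _ _ _ hpz' hw',
            he.1.symm, ?_, Or.inr ⟨hmw, hmw'⟩⟩
          rw [mx_gam1 M w hmw, mx_gam1 M w' hmw', he.1, he.2]
        · rcases hcmp w z' hmw hz'nm with h' | h'
          · have hcolwz' : M.col w = M.col z' :=
              Set.Subset.antisymm (M.mono _ _ h')
                (by rw [← hczz]; exact M.mono _ _ hzw)
            have hgam : Gam1 M w = Gam1 M z' := by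
              apply Set.Subset.antisymm
              · rw [← hgzz]
                exact gam1_antitone M hzw
              · exact gam1_antitone M h'
            exact ⟨z', M.refl z', M.trans _ _ _ hpz hzw, hpz', hcolwz', hgam,
              Or.inl h'⟩
          · exact absurd h' hc1
  · -- back
    rintro z z' w' ⟨hpz, hpz', hczz, hgzz, hd⟩ hz'w'
    rcases hd with hzz' | ⟨hmz, hmz'⟩
    · exact ⟨w', M.trans _ _ _ hzz' hz'w', M.trans _ _ _ hpz' hz'w',
        M.trans _ _ _ hpz' hz'w', rfl, rfl, Or.inl (M.refl w')⟩
    · have hwz : w' = z' := hmz' w' hz'w'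
      subst hwz
      exact ⟨z, M.refl z, hpz, hpz', hczz, hgzz, Or.inr ⟨hmz, hmz'⟩⟩

/-- Key upgrade lemma: `Gam2` transfers along matched successors. -/
lemma gam2_sub (M N : Model n) [Finite M.W] [Finite N.W]
    (hgM : M.Generated) (hgN : N.Generated)
    (hcmpN : ∀ a b : N.W, ¬ Mx N a → ¬ Mx N b → N.le a b ∨ N.le b a)
    (u : M.W) (v : N.W) (hG2 : Gam2 M u = Gam2 N v)
    (u' : M.W) (hu : M.le u u') (v₀ : N.W) (hv : N.le v v₀)
    (hcol : M.col u' = N.col v₀) (hG1 : Gam1 M u' = Gam1 N v₀) :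
    Gam2 M u' ⊆ Gam2 N v₀ := by
  rintro t ⟨w, hw, rfl⟩
  have hmem : (M.col w, Gam1 M w) ∈ Gam2 N v := by
    rw [← hG2]
    exact ⟨w, M.trans _ _ _ hu hw, rfl⟩
  obtain ⟨q, hq, hqe⟩ := hmem
  rw [Prod.mk.injEq] at hqe
  by_cases hmw : Mx M w
  · have hmem1 : (M.col w, Colset M w) ∈ Gam1 N v₀ := by
      rw [← hG1]
      exact ⟨w, hw, rfl⟩
    obtain ⟨z, hz, hze⟩ := hmem1
    rw [Prod.mk.injEq] at hze
    have hcs : Colset M w = {M.col w} := mx_colset M w hmw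
    have hmz : Mx N z := by
      apply F1' N hgN
      intro x hx
      have hmem2 : N.col x ∈ Colset N z := ⟨x, hx, rfl⟩
      rw [hze.2, hcs, Set.mem_singleton_iff] at hmem2
      rw [hmem2]
      exact hze.1.symm
    refine ⟨z, hz, ?_⟩
    rw [Prod.mk.injEq]
    refine ⟨hze.1, ?_⟩
    rw [mx_gam1 N z hmz, mx_gam1 M w hmw, hze.1, hze.2]
  · have hqnm : ¬ Mx N q := by
      intro hm
      apply hmw
      apply F1' M hgM
      intro x hx
      have hx1 : (M.col x, Colset M x) ∈ Gam1 M w := ⟨x, hx, rfl⟩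
      rw [← hqe.2, mx_gam1 N q hm, Set.mem_singleton_iff, Prod.mk.injEq] at hx1
      rw [hx1.1]
      exact hqe.1
    have hv₀nm : ¬ Mx N v₀ := by
      intro hm
      apply hmw
      have hu'mx : Mx M u' := by
        apply F1' M hgM
        intro x hx
        have hx1 : (M.col x, Colset M x) ∈ Gam1 N v₀ := by
          rw [← hG1]
          exact ⟨x, hx, rfl⟩
        rw [mx_gam1 N v₀ hm, Set.mem_singleton_iff, Prod.mk.injEq] at hx1
        rw [hx1.1, ← hcol]
      have hwu : w = u' := hu'mx w hw
      rw [hwu]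
      exact hu'mx
    rcases hcmpN q v₀ hqnm hv₀nm with h' | h'
    · have hcolq : N.col q = N.col v₀ := by
        apply Set.Subset.antisymm (N.mono _ _ h')
        rw [← hcol, hqe.1]
        exact M.mono _ _ hw
      have hgamq : Gam1 N q = Gam1 N v₀ := by
        apply Set.Subset.antisymm
        · rw [hqe.2, ← hG1]
          exact gam1_antitone M hw
        · exact gam1_antitone N h'
      have heq : q = v₀ := inj2 N hgN hcmpN q v₀ h' hcolq hgamq
      refine ⟨v₀, N.refl v₀, ?_⟩
      rw [← heq, Prod.mk.injEq]
      exact hqe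
    · refine ⟨q, h', ?_⟩
      rw [Prod.mk.injEq]
      exact hqe

/-- Forth property of the relation "equal color and equal `Gam2`". -/
lemma forthL (M N : Model n) [Finite M.W] [Finite N.W]
    (hgM : M.Generated) (hgN : N.Generated)
    (hcmpM : ∀ a b : M.W, ¬ Mx M a → ¬ Mx M b → M.le a b ∨ M.le b a)
    (hcmpN : ∀ a b : N.W, ¬ Mx N a → ¬ Mx N b → N.le a b ∨ N.le b a)
    (u : M.W) (v : N.W) (hG2 : Gam2 M u = Gam2 N v)
    (u' : M.W) (hu : M.le u u') :
    ∃ v', N.le v v' ∧ M.col u' = N.col v' ∧ Gam2 M u' = Gam2 N v' := by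
  have hmem : (M.col u', Gam1 M u') ∈ Gam2 N v := by
    rw [← hG2]
    exact ⟨u', hu, rfl⟩
  obtain ⟨v₀, hv, he⟩ := hmem
  rw [Prod.mk.injEq] at he
  refine ⟨v₀, hv, he.1.symm, Set.Subset.antisymm ?_ ?_⟩
  · exact gam2_sub M N hgM hgN hcmpN u v hG2 u' hu v₀ hv he.1.symm he.2.symm
  · exact gam2_sub N M hgN hgM hcmpM v u hG2.symm v₀ hv u' hu he.1 he.2

/-- A 3-bisimulation makes the 3-types of the related points equal. -/
lemma nbisim3_types (M N : Model n) (x : M.W) (y : N.W)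
    (h : Model.NBisimAt M N 3 x y) :
    M.col x = N.col y ∧ Gam2 M x = Gam2 N y := by
  obtain ⟨T, hmono, h3, hcol0, fwd, bwd⟩ := h
  have d1 : ∀ a b, T 1 a b → M.col a = N.col b ∧ Colset M a = Colset N b := by
    intro a b h1
    refine ⟨hcol0 _ _ (hmono 0 _ _ h1), Set.Subset.antisymm ?_ ?_⟩
    · rintro c ⟨w, hw, rfl⟩
      obtain ⟨w', hw', h0⟩ := fwd 0 a b w (by omega) h1 hw
      exact ⟨w', hw', (hcol0 _ _ h0).symm⟩
    · rintro c ⟨w', hw', rfl⟩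
      obtain ⟨w, hw, h0⟩ := bwd 0 a b w' (by omega) h1 hw'
      exact ⟨w, hw, hcol0 _ _ h0⟩
  have d2 : ∀ a b, T 2 a b → M.col a = N.col b ∧ Gam1 M a = Gam1 N b := by
    intro a b h2
    refine ⟨(d1 _ _ (hmono 1 _ _ h2)).1, Set.Subset.antisymm ?_ ?_⟩
    · rintro t ⟨w, hw, rfl⟩
      obtain ⟨w', hw', h1⟩ := fwd 1 a b w (by omega) h2 hw
      obtain ⟨e1, e2⟩ := d1 _ _ h1
      exact ⟨w', hw', by rw [e1, e2]⟩
    · rintro t ⟨w', hw', rfl⟩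
      obtain ⟨w, hw, h1⟩ := bwd 1 a b w' (by omega) h2 hw'
      obtain ⟨e1, e2⟩ := d1 _ _ h1
      exact ⟨w, hw, by rw [e1, e2]⟩
  refine ⟨hcol0 _ _ (hmono 0 _ _ (hmono 1 _ _ (hmono 2 _ _ h3))), ?_⟩
  apply Set.Subset.antisymm
  · rintro t ⟨w, hw, rfl⟩
    obtain ⟨w', hw', h2⟩ := fwd 2 x y w (by omega) h3 hw
    obtain ⟨e1, e2⟩ := d2 _ _ h2
    exact ⟨w', hw', by rw [e1, e2]⟩
  · rintro t ⟨w', hw', rfl⟩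
    obtain ⟨w, hw, h2⟩ := bwd 2 x y w' (by omega) h3 hw'
    obtain ⟨e1, e2⟩ := d2 _ _ h2
    exact ⟨w, hw, by rw [e1, e2]⟩

/-- Structural facts from the broken-comb assumption: finiteness, and any two
non-maximal points are comparable. -/
lemma comb_facts (M : Model n) (hM : ∃ m, IsBrokenComb M.frame m) :
    Finite M.W ∧ ∀ a b : M.W, ¬ Mx M a → ¬ Mx M b → M.le a b ∨ M.le b a := by
  obtain ⟨m, s, -, f, hbij, hord⟩ := hM
  have hfin : Finite M.W := by
    haveI : Finite (Comb m).W := by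
      show Finite (Fin m ⊕ Fin m)
      infer_instance
    haveI : Finite ((Comb m).restrict s).W := by
      show Finite {x : (Comb m).W // x ∈ s}
      infer_instance
    exact Finite.of_injective f hbij.injective
  refine ⟨hfin, ?_⟩
  intro a b ha hb
  have key : ∀ c : M.W, ¬ Mx M c → ∃ i : Fin m, (f c).1 = Sum.inl i := by
    intro c hc
    obtain ⟨i, hi⟩ | ⟨i, hi⟩ :
        (∃ i, (f c).1 = Sum.inl i) ∨ (∃ i, (f c).1 = Sum.inr i) := by
      rcases hfc : (f c).1 with i | i
      · exact Or.inl ⟨i, rfl⟩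
      · exact Or.inr ⟨i, rfl⟩
    · exact ⟨i, hi⟩
    · exfalso
      apply hc
      intro v hv
      have h1 : ((Comb m).restrict s).le (f c) (f v) := (hord c v).1 hv
      have h2 : combLe m (f c).1 (f v).1 := h1
      rw [hi] at h2
      obtain ⟨j, hj⟩ | ⟨j, hj⟩ :
          (∃ j, (f v).1 = Sum.inl j) ∨ (∃ j, (f v).1 = Sum.inr j) := by
        rcases hfv : (f v).1 with j | j
        · exact Or.inl ⟨j, rfl⟩
        · exact Or.inr ⟨j, rfl⟩
      · rw [hj] at h2
        exact h2.elim
      · rw [hj] at h2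
        have h3 : i = j := h2
        have h4 : f v = f c := by
          apply Subtype.ext
          rw [hj, hi]
          exact congrArg Sum.inr h3.symm
        exact hbij.injective h4
  obtain ⟨i, hi⟩ := key a ha
  obtain ⟨j, hj⟩ := key b hb
  rcases le_total i j with h' | h'
  · left
    apply (hord a b).2
    show combLe m (f a).1 (f b).1
    rw [hi, hj]
    exact h'
  · right
    apply (hord b a).2
    show combLe m (f b).1 (f a).1
    rw [hj, hi]
    exact h'

end Statement11Aux

/-- Let `P`, `Q` be broken combs and `(P, x)`, `(Q, x')`
`n`-generated models over the same `n` variables based on them. If they are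
`3`-bisimilar, then they are fully bisimilar. -/
theorem statement11 (n : ℕ) (M N : Model n)
    (hM : ∃ m, IsBrokenComb M.frame m) (hN : ∃ m, IsBrokenComb N.frame m)
    (hMg : M.Generated) (hNg : N.Generated)
    (h : M.NBisim N 3) : M.Bisim N := by
  obtain ⟨hfinM, hcmpM⟩ := comb_facts M hM
  obtain ⟨hfinN, hcmpN⟩ := comb_facts N hN
  haveI := hfinM
  haveI := hfinN
  obtain ⟨hcolr, hG2r⟩ := nbisim3_types M N M.root N.root h
  refine ⟨fun a b => M.col a = N.col b ∧ Gam2 M a = Gam2 N b,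
    ⟨hcolr, hG2r⟩, ?_, ?_, ?_⟩
  · intro a b hS
    exact hS.1
  · intro a b a' hS ha
    exact forthL M N hMg hNg hcmpM hcmpN a b hS.2 a' ha
  · intro a b b' hS hb
    obtain ⟨a', h1, h2, h3⟩ := forthL N M hNg hMg hcmpN hcmpM b a hS.2.symm b' hb
    exact ⟨a', h1, h2.symm, h3.symm⟩
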